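/- Let d ≥ 2 and n ≥ 1 be integers and let u, v ∈ [0,1]^n. Then the trace norm between the qudit-encoded pure-state density matrices is bounded below as ‖ρ(u) − ρ(v)‖₁ ≥ 2√( 1 − cos^{2n(d−1)}( (π/(2n)) · ∑_{i=1}^n |u_i − v_i| ) ). Consequently, if g₁ maps a latent space into [0,1]^n with modulus of continuity ω₁ (i.e., ∑_i |g₁(z)_i − g₁(z')_i| ≤ ω₁(‖z − z'‖₂) for all z, z'), any modulus of continuity ω of the composed map z ↦ ρ(g₁(z)) that is tight must satisfy ω(τ) ≥ √(1 − cos^{2n(d−1)}( (π/(2n)) ω₁(τ) )) for all τ ≥ 0. -/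

import Mathlib

open MeasureTheory Metric Finset
open scoped ComplexOrder

noncomputable section

/-- Trace norm of a complex square matrix: the trace of the positive semidefinite
square root of `Aᴴ * A`. -/
def traceNorm {m : Type*} [Fintype m] [DecidableEq m] (A : Matrix m m ℂ) : ℝ :=
  (((Matrix.posSemidef_conjTranspose_mul_self A).1.eigenvectorUnitary.1 *
      Matrix.diagonal (((↑) : ℝ → ℂ) ∘ (√·) ∘ (Matrix.posSemidef_conjTranspose_mul_self A).1.eigenvalues) *
      (star (Matrix.posSemidef_conjTranspose_mul_self A).1.eigenvectorUnitary :
        Matrix m m ℂ)).trace).re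

/-- Qudit encoding of a pixel value `u ∈ [0,1]`: the `j`-th component (0-indexed) is
`√(binom (d-1) j) · cos^{d-1-j}(πu/2) · sin^j(πu/2)`. -/
def quditVec (d : ℕ) (u : ℝ) : Fin d → ℂ := fun j =>
  (Real.sqrt ((d - 1).choose j) *
    Real.cos (Real.pi * u / 2) ^ (d - 1 - (j : ℕ)) *
    Real.sin (Real.pi * u / 2) ^ (j : ℕ) : ℝ)

/-- Encoded product pure state `|Φ(u)⟩ = φ_d(u_1) ⊗ ⋯ ⊗ φ_d(u_n)`, with `(ℂ^d)^{⊗n}`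
realized as functions `(Fin n → Fin d) → ℂ`. -/
def encState (d n : ℕ) (u : Fin n → ℝ) : (Fin n → Fin d) → ℂ := fun f =>
  ∏ i, quditVec d (u i) (f i)

/-- Density matrix `ρ(u) = |Φ(u)⟩⟨Φ(u)|` of the encoded state. -/
def encRho (d n : ℕ) (u : Fin n → ℝ) :
    Matrix (Fin n → Fin d) (Fin n → Fin d) ℂ := fun a b =>
  encState d n u a * star (encState d n u b)

namespace Stmt8Aux

open Matrix
set_option linter.unusedSectionVars false

variable {ι : Type*} [Fintype ι] [DecidableEq ι]

/-- Outer product `|x⟩⟨y|` of two vectors. -/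
def outer (x y : ι → ℂ) : Matrix ι ι ℂ := fun i j => x i * star (y j)

lemma outer_mul (x y z w : ι → ℂ) :
    outer x y * outer z w = (∑ k, star (y k) * z k) • outer x w := by
  ext i j
  simp only [Matrix.mul_apply, Matrix.smul_apply, outer, smul_eq_mul, Finset.sum_mul]
  exact Finset.sum_congr rfl fun k _ => by ring

lemma outer_conjTranspose (x y : ι → ℂ) : (outer x y)ᴴ = outer y x := by
  ext i j
  simp [outer, Matrix.conjTranspose_apply, mul_comm]

lemma outer_trace (x y : ι → ℂ) : (outer x y).trace = ∑ k, star (y k) * x k := by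
  simp [Matrix.trace, Matrix.diag, outer, mul_comm]

lemma psd_ofReal_smul {M : Matrix ι ι ℂ} (hM : M.PosSemidef) {c : ℝ} (hc : 0 ≤ c) :
    ((c : ℂ) • M).PosSemidef := hM.smul (by exact_mod_cast hc)

open scoped MatrixOrder in
lemma traceNorm_eq_of_sq (A B : Matrix ι ι ℂ) (hB : B.PosSemidef) (h : B * B = Aᴴ * A) :
    traceNorm A = B.trace.re := by
  have hP := Matrix.posSemidef_conjTranspose_mul_self A
  have e1 := hP.1.cfc_eq Real.sqrt
  rw [IsHermitian.cfc, Unitary.conjStarAlgAut_apply] at e1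
  have e2 : cfc Real.sqrt (Aᴴ * A) = B := by
    rw [← cfcₙ_eq_cfc, ← CFC.sqrt_eq_real_sqrt _ hP.nonneg]
    exact CFC.sqrt_unique h hB.nonneg
  unfold traceNorm
  rw [← e2, e1]
  rfl

lemma traceNorm_zero : traceNorm (0 : Matrix ι ι ℂ) = 0 := by
  rw [traceNorm_eq_of_sq 0 0 Matrix.PosSemidef.zero (by simp)]
  simp

/-- Trace norm of the difference of two pure states with real overlap `s`. -/
lemma traceNorm_eq (a b : ι → ℂ) (s : ℝ)
    (ha : ∑ k, star (a k) * a k = 1)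
    (hb : ∑ k, star (b k) * b k = 1)
    (hab : ∑ k, star (a k) * b k = (s : ℂ))
    (hba : ∑ k, star (b k) * a k = (s : ℂ))
    (hs : s ^ 2 < 1) :
    traceNorm (outer a a - outer b b) = 2 * Real.sqrt (1 - s ^ 2) := by
  set A := outer a a - outer b b with hA
  have hAH : Aᴴ = A := by
    simp [hA, Matrix.conjTranspose_sub, outer_conjTranspose]
  set M : Matrix ι ι ℂ :=
    outer a a + outer b b - (s : ℂ) • outer a b - (s : ℂ) • outer b a with hM
  have hAA : Aᴴ * A = M := by
    rw [hAH, hA, hM]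
    simp only [Matrix.sub_mul, Matrix.mul_sub, outer_mul, ha, hb, hab, hba, one_smul]
    module
  have hMM : M * M = ((1 - s ^ 2 : ℝ) : ℂ) • M := by
    rw [hM]
    simp only [Matrix.sub_mul, Matrix.mul_sub, Matrix.add_mul, Matrix.mul_add,
      smul_mul_assoc, mul_smul_comm, outer_mul, ha, hb, hab, hba, one_smul, smul_smul]
    push_cast
    module
  set t := 1 - s ^ 2 with htdef
  have ht : 0 < t := by simp only [htdef]; linarith
  have hst : Real.sqrt t * Real.sqrt t = t := Real.mul_self_sqrt ht.le
  have hst0 : Real.sqrt t ≠ 0 := by positivity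
  set c : ℝ := (Real.sqrt t)⁻¹ with hc
  have hc0 : (0:ℝ) ≤ c := by positivity
  have hpsd : (Aᴴ * A).PosSemidef := Matrix.posSemidef_conjTranspose_mul_self A
  have hBpsd : ((c : ℂ) • (Aᴴ * A)).PosSemidef := psd_ofReal_smul hpsd hc0
  have hcct : c * (c * t) = 1 := by
    rw [hc, ← mul_assoc, ← mul_inv, hst, inv_mul_cancel₀ ht.ne']
  have hB2 : ((c : ℂ) • (Aᴴ * A)) ^ 2 = Aᴴ * A := by
    rw [pow_two, smul_mul_assoc, mul_smul_comm, smul_smul, hAA, hMM, smul_smul]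
    rw [show ((c:ℂ) * (c:ℂ) * ((t:ℝ):ℂ)) = ((c * (c * t) : ℝ) : ℂ) by push_cast; ring,
      hcct]
    simp
  have hsqrt : traceNorm A = ((c : ℂ) • (Aᴴ * A)).trace.re :=
    traceNorm_eq_of_sq A _ hBpsd (by rw [← pow_two]; exact hB2)
  have htr : ((c : ℂ) • (Aᴴ * A)).trace = ((2 * Real.sqrt t : ℝ) : ℂ) := by
    rw [hAA, hM]
    rw [Matrix.trace_smul, Matrix.trace_sub, Matrix.trace_sub, Matrix.trace_add,
      Matrix.trace_smul, Matrix.trace_smul, outer_trace, outer_trace, outer_trace,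
      outer_trace, ha, hb, hab, hba]
    have key : c * (1 + 1 - s * s - s * s) = 2 * Real.sqrt t := by
      have h2 : (1:ℝ) + 1 - s * s - s * s = 2 * (Real.sqrt t * Real.sqrt t) := by
        rw [hst, htdef]; ring
      rw [h2, hc]
      field_simp
    calc (c:ℂ) • ((1:ℂ) + 1 - (s:ℂ) • (s:ℂ) - (s:ℂ) • (s:ℂ))
        = ((c * (1 + 1 - s * s - s * s) : ℝ) : ℂ) := by
          simp only [smul_eq_mul]; push_cast; ring
      _ = ((2 * Real.sqrt t : ℝ) : ℂ) := by rw [key]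
  rw [hsqrt, htr, Complex.ofReal_re]

lemma quditVec_inner (d : ℕ) (hd : 1 ≤ d) (u v : ℝ) :
    ∑ j : Fin d, star (quditVec d u j) * quditVec d v j
      = ((Real.cos (Real.pi * u / 2 - Real.pi * v / 2) ^ (d - 1) : ℝ) : ℂ) := by
  set cA := Real.cos (Real.pi * u / 2) with hcA
  set sA := Real.sin (Real.pi * u / 2) with hsA
  set cB := Real.cos (Real.pi * v / 2) with hcB
  set sB := Real.sin (Real.pi * v / 2) with hsB
  have hreal : ∀ j : Fin d, star (quditVec d u j) * quditVec d v j
      = (((Real.sqrt ((d - 1).choose j) * cA ^ (d - 1 - (j : ℕ)) * sA ^ (j : ℕ)) *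
          (Real.sqrt ((d - 1).choose j) * cB ^ (d - 1 - (j : ℕ)) * sB ^ (j : ℕ)) : ℝ) : ℂ) := by
    intro j
    simp [quditVec, Complex.star_def, Complex.conj_ofReal, ← Complex.ofReal_mul]
    rfl
  simp_rw [hreal]
  rw [← Complex.ofReal_sum]
  congr 1
  have hrange : ∑ j : Fin d,
      ((Real.sqrt ((d - 1).choose j) * cA ^ (d - 1 - (j : ℕ)) * sA ^ (j : ℕ)) *
        (Real.sqrt ((d - 1).choose j) * cB ^ (d - 1 - (j : ℕ)) * sB ^ (j : ℕ)))
      = ∑ j ∈ Finset.range d,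
      ((Real.sqrt ((d - 1).choose j) * cA ^ (d - 1 - j) * sA ^ j) *
        (Real.sqrt ((d - 1).choose j) * cB ^ (d - 1 - j) * sB ^ j)) :=
    Fin.sum_univ_eq_sum_range (fun j =>
      (Real.sqrt ((d - 1).choose j) * cA ^ (d - 1 - j) * sA ^ j) *
        (Real.sqrt ((d - 1).choose j) * cB ^ (d - 1 - j) * sB ^ j)) d
  rw [hrange, Real.cos_sub, add_comm (cA * cB) (sA * sB), add_pow,
    show d - 1 + 1 = d from by omega]
  refine Finset.sum_congr rfl fun j hj => ?_
  have hC : Real.sqrt ((d - 1).choose j) * Real.sqrt ((d - 1).choose j)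
      = (((d - 1).choose j : ℝ)) := Real.mul_self_sqrt (Nat.cast_nonneg _)
  calc (Real.sqrt ((d - 1).choose j) * cA ^ (d - 1 - j) * sA ^ j) *
        (Real.sqrt ((d - 1).choose j) * cB ^ (d - 1 - j) * sB ^ j)
      = (Real.sqrt ((d - 1).choose j) * Real.sqrt ((d - 1).choose j)) *
          (cA ^ (d - 1 - j) * cB ^ (d - 1 - j)) * (sA ^ j * sB ^ j) := by ring
    _ = ((d - 1).choose j : ℝ) * (cA * cB) ^ (d - 1 - j) * (sA * sB) ^ j := by
        rw [hC, ← mul_pow, ← mul_pow]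
    _ = (sA * sB) ^ j * (cA * cB) ^ (d - 1 - j) * ((d - 1).choose j : ℝ) := by ring

lemma encState_inner (d n : ℕ) (hd : 1 ≤ d) (u v : Fin n → ℝ) :
    ∑ f : Fin n → Fin d, star (encState d n u f) * encState d n v f
      = ((∏ i, Real.cos (Real.pi * u i / 2 - Real.pi * v i / 2) ^ (d - 1) : ℝ) : ℂ) := by
  have hterm : ∀ f : Fin n → Fin d, star (encState d n u f) * encState d n v f
      = ∏ i, (star (quditVec d (u i) (f i)) * quditVec d (v i) (f i)) := by
    intro f
    rw [encState, encState, star_prod, ← Finset.prod_mul_distrib]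
  simp_rw [hterm]
  rw [← Fintype.prod_sum (κ := fun _ : Fin n => Fin d)
    (fun i j => star (quditVec d (u i) j) * quditVec d (v i) j)]
  simp_rw [quditVec_inner d hd]
  rw [← Complex.ofReal_prod]

lemma jensen_cos (n : ℕ) (hn : 1 ≤ n) (x : Fin n → ℝ)
    (h0 : ∀ i, 0 ≤ x i) (h1 : ∀ i, x i ≤ Real.pi / 2) :
    ∏ i, Real.cos (x i) ≤ Real.cos ((∑ i, x i) / n) ^ n := by
  have hπ := Real.pi_pos
  have hn0 : (0:ℝ) < n := by exact_mod_cast hn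
  have hw : ∑ _i : Fin n, (1/(n:ℝ)) = 1 := by
    rw [Finset.sum_const, Finset.card_univ, Fintype.card_fin, nsmul_eq_mul]
    field_simp
  have hmem : ∀ i : Fin n, x i ∈ Set.Icc (-(Real.pi/2)) (Real.pi/2) :=
    fun i => ⟨by linarith [h0 i], h1 i⟩
  have hcos0 : ∀ i, 0 ≤ Real.cos (x i) :=
    fun i => Real.cos_nonneg_of_mem_Icc (hmem i)
  have hJ : ∑ i, (1/(n:ℝ)) • Real.cos (x i) ≤ Real.cos (∑ i, (1/(n:ℝ)) • x i) :=
    strictConcaveOn_cos_Icc.concaveOn.le_map_sum (fun i _ => by positivity) hw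
      (fun i _ => hmem i)
  have hAM : ∏ i, Real.cos (x i) ^ (1/(n:ℝ)) ≤ ∑ i, (1/(n:ℝ)) * Real.cos (x i) :=
    Real.geom_mean_le_arith_mean_weighted univ _ _ (fun i _ => by positivity) hw
      (fun i _ => hcos0 i)
  have havg : ∑ i, (1/(n:ℝ)) • x i = (∑ i, x i) / n := by
    simp only [smul_eq_mul, ← Finset.mul_sum]
    ring
  have hGn : (∏ i, Real.cos (x i) ^ (1/(n:ℝ))) ^ n = ∏ i, Real.cos (x i) := by
    rw [← Finset.prod_pow]
    refine Finset.prod_congr rfl fun i _ => ?_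
    rw [← Real.rpow_natCast (Real.cos (x i) ^ (1/(n:ℝ))) n, ← Real.rpow_mul (hcos0 i)]
    rw [one_div, inv_mul_cancel₀ (by positivity : (n:ℝ) ≠ 0), Real.rpow_one]
  have hG0 : 0 ≤ ∏ i, Real.cos (x i) ^ (1/(n:ℝ)) :=
    Finset.prod_nonneg fun i _ => Real.rpow_nonneg (hcos0 i) _
  have hS0 : 0 ≤ ∑ i, (1/(n:ℝ)) * Real.cos (x i) :=
    Finset.sum_nonneg fun i _ => mul_nonneg (by positivity) (hcos0 i)
  calc ∏ i, Real.cos (x i) = (∏ i, Real.cos (x i) ^ (1/(n:ℝ))) ^ n := hGn.symm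
    _ ≤ (∑ i, (1/(n:ℝ)) * Real.cos (x i)) ^ n := pow_le_pow_left₀ hG0 hAM n
    _ ≤ Real.cos ((∑ i, x i) / n) ^ n := by
        apply pow_le_pow_left₀ hS0
        calc ∑ i, (1/(n:ℝ)) * Real.cos (x i) = ∑ i, (1/(n:ℝ)) • Real.cos (x i) := by
              simp [smul_eq_mul]
          _ ≤ Real.cos (∑ i, (1/(n:ℝ)) • x i) := hJ
          _ = Real.cos ((∑ i, x i) / n) := by rw [havg]

/-- Part 1 of the statement: trace-norm lower bound for encoded states. -/
lemma main1 (d n : ℕ) (hd : 2 ≤ d) (hn : 1 ≤ n) (u v : Fin n → ℝ)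
    (hu : ∀ i, u i ∈ Set.Icc (0:ℝ) 1) (hv : ∀ i, v i ∈ Set.Icc (0:ℝ) 1) :
    2 * Real.sqrt (1 - Real.cos (Real.pi / (2 * n) * ∑ i, |u i - v i|) ^ (2 * n * (d - 1)))
      ≤ traceNorm (encRho d n u - encRho d n v) := by
  have hπ := Real.pi_pos
  by_cases huv : u = v
  · subst huv
    have h1 : (∑ i, |u i - u i|) = 0 := by simp
    rw [h1, mul_zero, Real.cos_zero, one_pow, sub_self, Real.sqrt_zero, mul_zero,
      sub_self, traceNorm_zero]
  · obtain ⟨i₀, hi₀⟩ : ∃ i, u i ≠ v i := by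
      by_contra h; push_neg at h; exact huv (funext h)
    set m := d - 1 with hm
    have hQ : 1 ≤ d := by omega
    set x : Fin n → ℝ := fun i => Real.pi * |u i - v i| / 2 with hx
    have hΔ : ∀ i, |u i - v i| ≤ 1 := by
      intro i
      have h1 := hu i; have h2 := hv i
      rw [Set.mem_Icc] at h1 h2
      rw [abs_le]; constructor <;> [linarith [h1.1, h2.2]; linarith [h1.2, h2.1]]
    have hx0 : ∀ i, 0 ≤ x i := fun i => by simp only [hx]; positivity
    have hxpi : ∀ i, x i ≤ Real.pi / 2 := by
      intro i
      simp only [hx]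
      nlinarith [abs_nonneg (u i - v i), hΔ i]
    have hcos0 : ∀ i, 0 ≤ Real.cos (x i) :=
      fun i => Real.cos_nonneg_of_mem_Icc ⟨by linarith [hx0 i], hxpi i⟩
    have hcos1 : ∀ i, Real.cos (x i) ≤ 1 := fun i => Real.cos_le_one _
    have hcid : ∀ w w' : ℝ, Real.cos (Real.pi * w / 2 - Real.pi * w' / 2)
        = Real.cos (Real.pi * |w - w'| / 2) := by
      intro w w'
      rw [← Real.cos_abs (Real.pi * w / 2 - Real.pi * w' / 2)]
      congr 1
      rw [show Real.pi * w / 2 - Real.pi * w' / 2 = Real.pi * (w - w') / 2 by ring,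
        abs_div, abs_mul, abs_of_nonneg hπ.le, abs_two]
    set s : ℝ := ∏ i, Real.cos (x i) ^ m with hs
    have hs0 : 0 ≤ s := Finset.prod_nonneg fun i _ => pow_nonneg (hcos0 i) m
    have hxpos : 0 < x i₀ := by
      simp only [hx]
      have h := abs_pos.mpr (sub_ne_zero.mpr hi₀)
      positivity
    have hclt : Real.cos (x i₀) < 1 := by
      have h := Real.cos_lt_cos_of_nonneg_of_le_pi (le_refl 0)
        (by linarith [hxpi i₀] : x i₀ ≤ Real.pi) hxpos
      rwa [Real.cos_zero] at h
    have hslt : s < 1 := by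
      have hle : s ≤ Real.cos (x i₀) ^ m := by
        rw [hs, ← Finset.mul_prod_erase univ _ (mem_univ i₀)]
        have hrest : ∏ i ∈ univ.erase i₀, Real.cos (x i) ^ m ≤ 1 :=
          Finset.prod_le_one (fun i _ => pow_nonneg (hcos0 i) m)
            (fun i _ => pow_le_one₀ (hcos0 i) (hcos1 i))
        nlinarith [pow_nonneg (hcos0 i₀) m,
          Finset.prod_nonneg (fun i (_ : i ∈ univ.erase i₀) => pow_nonneg (hcos0 i) m)]
      have h2 : Real.cos (x i₀) ^ m < 1 := pow_lt_one₀ (hcos0 i₀) hclt (by omega)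
      linarith
    have hs2 : s ^ 2 < 1 := by nlinarith
    have ha : ∑ k, star (encState d n u k) * encState d n u k = 1 := by
      rw [encState_inner d n hQ u u]
      simp
    have hb : ∑ k, star (encState d n v k) * encState d n v k = 1 := by
      rw [encState_inner d n hQ v v]
      simp
    have hab : ∑ k, star (encState d n u k) * encState d n v k = ((s:ℝ) : ℂ) := by
      rw [encState_inner d n hQ u v]
      norm_cast
      rw [hs]
      refine Finset.prod_congr rfl fun i _ => ?_
      rw [hcid (u i) (v i)]
    have hba : ∑ k, star (encState d n v k) * encState d n u k = ((s:ℝ) : ℂ) := by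
      rw [encState_inner d n hQ v u]
      norm_cast
      rw [hs]
      refine Finset.prod_congr rfl fun i _ => ?_
      rw [hcid (v i) (u i), abs_sub_comm]
    have heq : traceNorm (encRho d n u - encRho d n v) = 2 * Real.sqrt (1 - s ^ 2) :=
      traceNorm_eq (encState d n u) (encState d n v) s ha hb hab hba hs2
    rw [heq]
    have hkey : ∏ i, Real.cos (x i) ≤ Real.cos ((∑ i, x i) / n) ^ n :=
      jensen_cos n hn x hx0 hxpi
    have hGnn : 0 ≤ ∏ i, Real.cos (x i) := Finset.prod_nonneg fun i _ => hcos0 i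
    have hn0 : (0:ℝ) < n := by exact_mod_cast hn
    have hθ : (∑ i, x i) / n = Real.pi / (2 * n) * ∑ i, |u i - v i| := by
      simp only [hx]
      rw [show (∑ i, Real.pi * |u i - v i| / 2) = Real.pi / 2 * ∑ i, |u i - v i| by
        rw [Finset.mul_sum]; exact Finset.sum_congr rfl fun i _ => by ring]
      field_simp
    have hsC : s ^ 2 ≤ Real.cos (Real.pi / (2 * n) * ∑ i, |u i - v i|) ^ (2 * n * m) := by
      have e1 : s ^ 2 = (∏ i, Real.cos (x i)) ^ (2 * m) := by
        rw [hs, Finset.prod_pow, ← pow_mul, Nat.mul_comm]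
      have e2 : Real.cos (Real.pi / (2 * n) * ∑ i, |u i - v i|) ^ (2 * n * m)
          = (Real.cos ((∑ i, x i) / n) ^ n) ^ (2 * m) := by
        rw [hθ, ← pow_mul]
        congr 1
        ring
      rw [e1, e2]
      exact pow_le_pow_left₀ hGnn hkey (2 * m)
    have hmono : Real.sqrt (1 - Real.cos (Real.pi / (2 * n) * ∑ i, |u i - v i|) ^ (2 * n * m))
        ≤ Real.sqrt (1 - s ^ 2) := Real.sqrt_le_sqrt (by linarith)
    linarith

end Stmt8Aux

/-- lower bound on the trace norm between qudit-encoded states, and the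
induced lower bound on any tight modulus of continuity of the composed generator. -/
theorem stmt8 {Z : Type*} [MetricSpace Z] (d n : ℕ) (hd : 2 ≤ d) (hn : 1 ≤ n) :
    (∀ u v : Fin n → ℝ, (∀ i, u i ∈ Set.Icc (0 : ℝ) 1) → (∀ i, v i ∈ Set.Icc (0 : ℝ) 1) →
      2 * Real.sqrt (1 - Real.cos (Real.pi / (2 * n) * ∑ i, |u i - v i|) ^ (2 * n * (d - 1)))
        ≤ traceNorm (encRho d n u - encRho d n v)) ∧
    (∀ (g₁ : Z → Fin n → ℝ) (ω₁ ω : ℝ → ℝ),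
      (∀ z i, g₁ z i ∈ Set.Icc (0 : ℝ) 1) →
      -- `ω₁` is a modulus of continuity of `g₁` in the `ℓ¹` norm on the image
      (∀ z z', ∑ i, |g₁ z i - g₁ z' i| ≤ ω₁ (dist z z')) →
      -- `ω` is a modulus of continuity of the composed map `z ↦ ρ(g₁(z))`
      (∀ z z', traceNorm (encRho d n (g₁ z) - encRho d n (g₁ z')) ≤ ω (dist z z')) →
      -- tightness: the bound `ω₁` is attained at every distance scale `τ`
      (∀ τ : ℝ, 0 ≤ τ → ∃ z z', dist z z' = τ ∧ ∑ i, |g₁ z i - g₁ z' i| = ω₁ τ) →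
      ∀ τ : ℝ, 0 ≤ τ →
        Real.sqrt (1 - Real.cos (Real.pi / (2 * n) * ω₁ τ) ^ (2 * n * (d - 1))) ≤ ω τ) := by
  constructor
  · exact fun u v hu hv => Stmt8Aux.main1 d n hd hn u v hu hv
  · intro g₁ ω₁ ω hg hmod1 hmod htight τ hτ
    obtain ⟨z, z', hdist, hsum⟩ := htight τ hτ
    have h1 := Stmt8Aux.main1 d n hd hn (g₁ z) (g₁ z') (hg z) (hg z')
    rw [hsum] at h1
    have h2 := hmod z z'
    rw [hdist] at h2
    have h3 : (0:ℝ) ≤ Real.sqrt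
        (1 - Real.cos (Real.pi / (2 * n) * ω₁ τ) ^ (2 * n * (d - 1))) :=
      Real.sqrt_nonneg _
    linarith

end
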